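/- Let b_1,...,b_n be linearly independent vectors in ℝ^n with Gram–Schmidt vectors b_1*,...,b_n* and Gram–Schmidt coefficients μ_{i,j} = ⟨b_i, b_j*⟩/‖b_j*‖². For any i, there exist integers x_1,...,x_{i−1} such that the vector w = b_i + Σ_{j<i} x_j b_j satisfies |⟨w, b_j*⟩|/‖b_j*‖² ≤ 1/2 for all j < i, and consequently ‖w‖² ≤ ‖b_i*‖² + (1/4) Σ_{j<i} ‖b_j*‖². -/

import Mathlib

open Finset
open scoped RealInnerProductSpace

noncomputable def latticeOf {n : ℕ} (b : Fin n → EuclideanSpace ℝ (Fin n)) :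
    AddSubgroup (EuclideanSpace ℝ (Fin n)) := AddSubgroup.closure (Set.range b)

/-- The `i`-th successive minimum of a lattice `L` (with `i ≥ 1`): the least `r ≥ 0`
such that the closed ball of radius `r` contains `i` linearly independent lattice vectors. -/
noncomputable def succMin {n : ℕ} (L : AddSubgroup (EuclideanSpace ℝ (Fin n))) (i : ℕ) : ℝ :=
  sInf {r : ℝ | 0 ≤ r ∧ ∃ v : Fin i → EuclideanSpace ℝ (Fin n),
    (∀ j, v j ∈ L) ∧ LinearIndependent ℝ v ∧ ∀ j, ‖v j‖ ≤ r}

/-- A basis `b` of the full-rank lattice it generates is *strongly reduced* if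
(1) there are linearly independent lattice vectors `v i` realizing the successive minima whose
integer coordinates over `b` have nonzero `i`-th coordinate and vanish beyond `i`, and
(2) each `b i` is shortest in its coset modulo the preceding basis vectors. -/
def StronglyReduced {n : ℕ} (b : Fin n → EuclideanSpace ℝ (Fin n)) : Prop :=
  (∃ v : Fin n → EuclideanSpace ℝ (Fin n), ∃ x : Fin n → Fin n → ℤ,
    LinearIndependent ℝ v ∧ (∀ i, v i ∈ latticeOf b) ∧
    (∀ i : Fin n, ‖v i‖ = succMin (latticeOf b) ((i : ℕ) + 1)) ∧
    (∀ i, v i = ∑ j, x i j • b j) ∧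
    (∀ i, x i i ≠ 0) ∧ (∀ i j, i < j → x i j = 0)) ∧
  (∀ i : Fin n, ∀ c : Fin n → ℤ,
    ‖b i‖ ≤ ‖b i + ∑ j ∈ Finset.univ.filter (· < i), c j • b j‖)

/-- The Gram–Schmidt orthogonalization of a family indexed by `Fin n`. -/
noncomputable def gs {n : ℕ} (b : Fin n → EuclideanSpace ℝ (Fin n)) :
    Fin n → EuclideanSpace ℝ (Fin n) :=
  @InnerProductSpace.gramSchmidt ℝ (EuclideanSpace ℝ (Fin n)) _ _ _ (Fin n) _ _
    (inferInstance : WellFoundedLT (Fin n)) b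

section Aux

variable {n : ℕ}

private lemma gs_orth (b : Fin n → EuclideanSpace ℝ (Fin n)) {j k : Fin n} (h : j ≠ k) :
    ⟪gs b j, gs b k⟫ = 0 :=
  @InnerProductSpace.gramSchmidt_orthogonal ℝ (EuclideanSpace ℝ (Fin n)) _ _ _ (Fin n) _ _
    (inferInstance : WellFoundedLT (Fin n)) b j k h

private lemma gs_ne_zero {b : Fin n → EuclideanSpace ℝ (Fin n)}
    (hli : LinearIndependent ℝ b) (j : Fin n) : gs b j ≠ 0 :=
  @InnerProductSpace.gramSchmidt_ne_zero ℝ (EuclideanSpace ℝ (Fin n)) _ _ _ (Fin n) _ _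
    (inferInstance : WellFoundedLT (Fin n)) b j hli

private lemma inner_b_gs_of_lt (b : Fin n → EuclideanSpace ℝ (Fin n)) {k j : Fin n} (h : k < j) :
    ⟪b k, gs b j⟫ = 0 := by
  rw [real_inner_comm]
  exact @InnerProductSpace.gramSchmidt_inv_triangular ℝ (EuclideanSpace ℝ (Fin n)) _ _ _ (Fin n) _ _
    (inferInstance : WellFoundedLT (Fin n)) b k j h

private lemma inner_b_gs_self (b : Fin n → EuclideanSpace ℝ (Fin n)) (k : Fin n) :
    ⟪b k, gs b k⟫ = ‖gs b k‖ ^ 2 := by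
  have hdef := @InnerProductSpace.gramSchmidt_def'' ℝ (EuclideanSpace ℝ (Fin n)) _ _ _ (Fin n) _ _
    (inferInstance : WellFoundedLT (Fin n)) b k
  have hgs : gs b = @InnerProductSpace.gramSchmidt ℝ (EuclideanSpace ℝ (Fin n)) _ _ _ (Fin n) _ _
    (inferInstance : WellFoundedLT (Fin n)) b := rfl
  rw [← hgs] at hdef
  conv_lhs => rw [hdef]
  rw [inner_add_left, sum_inner, Finset.sum_eq_zero, add_zero, real_inner_self_eq_norm_sq]
  intro l hl
  rw [real_inner_smul_left, gs_orth b (Finset.mem_Iio.1 hl).ne, mul_zero]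

private lemma inner_w_gs (b : Fin n → EuclideanSpace ℝ (Fin n)) (x : Fin n → ℤ) (i j : Fin n) :
    ⟪b i + ∑ l ∈ Finset.univ.filter (· < i), x l • b l, gs b j⟫
      = ⟪b i, gs b j⟫ + ∑ l ∈ Finset.univ.filter (· < i), (x l : ℝ) * ⟪b l, gs b j⟫ := by
  rw [inner_add_left, sum_inner]
  congr 1
  refine Finset.sum_congr rfl fun l _ => ?_
  rw [← Int.cast_smul_eq_zsmul ℝ, real_inner_smul_left]

private lemma inner_w_gs_self (b : Fin n → EuclideanSpace ℝ (Fin n)) (x : Fin n → ℤ) (i : Fin n) :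
    ⟪b i + ∑ l ∈ Finset.univ.filter (· < i), x l • b l, gs b i⟫ = ‖gs b i‖ ^ 2 := by
  rw [inner_w_gs, inner_b_gs_self, Finset.sum_eq_zero, add_zero]
  intro l hl
  rw [inner_b_gs_of_lt b (Finset.mem_filter.1 hl).2, mul_zero]

private lemma exists_aux (b : Fin n → EuclideanSpace ℝ (Fin n))
    (hli : LinearIndependent ℝ b) (i : Fin n) (m : ℕ) :
    ∃ x : Fin n → ℤ,
      (∀ l : Fin n, x l ≠ 0 → l < i ∧ (i : ℕ) ≤ (l : ℕ) + m) ∧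
      ∀ j : Fin n, j < i → (i : ℕ) ≤ (j : ℕ) + m →
        |⟪b i + ∑ l ∈ Finset.univ.filter (· < i), x l • b l, gs b j⟫|
          ≤ (1 / 2) * ‖gs b j‖ ^ 2 := by
  induction m with
  | zero =>
    refine ⟨0, fun l hl => absurd rfl hl, fun j hj hji => absurd hji ?_⟩
    have := Fin.lt_def.1 hj
    omega
  | succ m ih =>
    obtain ⟨x, hsupp, hx⟩ := ih
    by_cases him : (i : ℕ) ≤ m
    · refine ⟨x, fun l hl => ⟨(hsupp l hl).1, by have := (hsupp l hl).2; omega⟩,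
        fun j hj _ => hx j hj (by omega)⟩
    · push_neg at him
      have hmn : (i : ℕ) - m - 1 < n := by have := i.isLt; omega
      set k : Fin n := ⟨(i : ℕ) - m - 1, hmn⟩ with hk
      have hki : k < i := by rw [Fin.lt_def]; simp [hk]; omega
      have hxk : x k = 0 := by
        by_contra h
        have := (hsupp k h).2
        simp [hk] at this
        omega
      set w := b i + ∑ l ∈ Finset.univ.filter (· < i), x l • b l with hw
      set μ : ℝ := ⟪w, gs b k⟫ / ‖gs b k‖ ^ 2 with hμ
      set r : ℤ := round μ with hr
      have hgknz : ‖gs b k‖ ^ 2 ≠ 0 :=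
        pow_ne_zero 2 (norm_ne_zero_iff.2 (gs_ne_zero hli k))
      have hsum : ∑ l ∈ Finset.univ.filter (· < i), (Function.update x k (-r)) l • b l
          = (∑ l ∈ Finset.univ.filter (· < i), x l • b l) + (-r) • b k := by
        have hstep : ∀ l ∈ Finset.univ.filter (· < i),
            (Function.update x k (-r)) l • b l
              = x l • b l + (if l = k then (-r) • b k else 0) := by
          intro l _
          by_cases hl : l = k
          · subst hl
            simp [Function.update_self, hxk]
          · simp [Function.update_of_ne hl, hl]
        rw [Finset.sum_congr rfl hstep, Finset.sum_add_distrib, Finset.sum_ite_eq',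
          if_pos (by simp [hki])]
      have hinner : ∀ j : Fin n,
          ⟪b i + ∑ l ∈ Finset.univ.filter (· < i), (Function.update x k (-r)) l • b l, gs b j⟫
            = ⟪w, gs b j⟫ + (-r : ℝ) * ⟪b k, gs b j⟫ := by
        intro j
        rw [hsum, ← add_assoc, ← hw, inner_add_left, ← Int.cast_smul_eq_zsmul ℝ,
          real_inner_smul_left]
        norm_num
      refine ⟨Function.update x k (-r), ?_, ?_⟩
      · intro l hl
        by_cases hlk : l = k
        · subst hlk
          exact ⟨hki, by simp [hk]; omega⟩
        · rw [Function.update_of_ne hlk] at hl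
          exact ⟨(hsupp l hl).1, by have := (hsupp l hl).2; omega⟩
      · intro j hj hji
        by_cases hjm : (i : ℕ) ≤ (j : ℕ) + m
        · -- old coverage; k < j so inner with b k vanishes
          have hkj : k < j := by rw [Fin.lt_def]; simp [hk]; omega
          rw [hinner, inner_b_gs_of_lt b hkj, mul_zero, add_zero]
          exact hx j hj hjm
        · -- j = k
          have hjk : j = k := by
            apply Fin.ext
            simp [hk]
            have := Fin.lt_def.1 hj
            omega
          rw [hjk, hinner, inner_b_gs_self]
          have hwk : ⟪w, gs b k⟫ = μ * ‖gs b k‖ ^ 2 := by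
            rw [hμ]
            exact (div_mul_cancel₀ _ hgknz).symm
          rw [hwk]
          have : μ * ‖gs b k‖ ^ 2 + (-r : ℝ) * ‖gs b k‖ ^ 2 = (μ - r) * ‖gs b k‖ ^ 2 := by ring
          rw [this, abs_mul, abs_of_nonneg (by positivity : (0:ℝ) ≤ ‖gs b k‖ ^ 2)]
          exact mul_le_mul_of_nonneg_right (abs_sub_round μ) (by positivity)

end Aux

theorem size_reduce_exists {n : ℕ} (b : Fin n → EuclideanSpace ℝ (Fin n))
    (hli : LinearIndependent ℝ b) (i : Fin n) :
    ∃ x : Fin n → ℤ,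
      (∀ j : Fin n, j < i →
        |(inner ℝ (b i + ∑ l ∈ Finset.univ.filter (· < i), x l • b l) (gs b j) : ℝ)| /
          ‖gs b j‖ ^ 2 ≤ 1 / 2) ∧
      ‖b i + ∑ l ∈ Finset.univ.filter (· < i), x l • b l‖ ^ 2 ≤
        ‖gs b i‖ ^ 2 + (1 / 4) * ∑ j ∈ Finset.univ.filter (· < i), ‖gs b j‖ ^ 2 := by
  obtain ⟨x, -, hx⟩ := exists_aux b hli i n
  have hx' : ∀ j : Fin n, j < i →
      |⟪b i + ∑ l ∈ Finset.univ.filter (· < i), x l • b l, gs b j⟫| ≤ (1/2) * ‖gs b j‖ ^ 2 :=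
    fun j hj => hx j hj (by have := i.isLt; omega)
  set w := b i + ∑ l ∈ Finset.univ.filter (· < i), x l • b l with hw
  have hpos : ∀ j : Fin n, (0:ℝ) < ‖gs b j‖ ^ 2 := fun j =>
    pow_pos (norm_pos_iff.2 (gs_ne_zero hli j)) 2
  refine ⟨x, fun j hj => ?_, ?_⟩
  · rw [div_le_iff₀ (hpos j)]
    calc |⟪w, gs b j⟫| ≤ (1/2) * ‖gs b j‖ ^ 2 := hx' j hj
    _ = 1 / 2 * ‖gs b j‖ ^ 2 := by ring
  · -- Parseval
    have hfr : Module.finrank ℝ (EuclideanSpace ℝ (Fin n)) = Fintype.card (Fin n) :=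
      finrank_euclideanSpace
    set e := @InnerProductSpace.gramSchmidtOrthonormalBasis ℝ (EuclideanSpace ℝ (Fin n)) _ _ _ (Fin n) _ _
      (inferInstance : WellFoundedLT (Fin n)) _ _ hfr b with he
    have heq : ∀ j : Fin n, e j = ‖gs b j‖⁻¹ • gs b j := by
      intro j
      have hnz : @InnerProductSpace.gramSchmidtNormed ℝ (EuclideanSpace ℝ (Fin n)) _ _ _ (Fin n) _ _
          (inferInstance : WellFoundedLT (Fin n)) b j ≠ 0 := by
        have h1 := @InnerProductSpace.gramSchmidtNormed_unit_length ℝ (EuclideanSpace ℝ (Fin n)) _ _ _ (Fin n) _ _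
          (inferInstance : WellFoundedLT (Fin n)) b j hli
        intro h0
        rw [h0, norm_zero] at h1
        norm_num at h1
      rw [he, @InnerProductSpace.gramSchmidtOrthonormalBasis_apply ℝ (EuclideanSpace ℝ (Fin n)) _ _ _ (Fin n) _ _
          (inferInstance : WellFoundedLT (Fin n)) _ _ hfr b j hnz]
      rfl
    have hterm : ∀ j : Fin n, ⟪w, e j⟫ = ‖gs b j‖⁻¹ * ⟪w, gs b j⟫ := by
      intro j
      rw [heq j, real_inner_smul_right]
    have hparseval : ‖w‖ ^ 2 = ∑ j : Fin n, ⟪w, e j⟫ ^ 2 := by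
      rw [← real_inner_self_eq_norm_sq, ← OrthonormalBasis.sum_inner_mul_inner e w w]
      refine Finset.sum_congr rfl fun j _ => ?_
      rw [real_inner_comm (e j) w, sq]
    have hgt : ∀ j : Fin n, i < j → ⟪w, gs b j⟫ = 0 := by
      intro j hij
      rw [hw, inner_w_gs, inner_b_gs_of_lt b hij, Finset.sum_eq_zero, add_zero]
      intro l hl
      rw [inner_b_gs_of_lt b ((Finset.mem_filter.1 hl).2.trans hij), mul_zero]
    have hsplit : ∑ j : Fin n, ⟪w, e j⟫ ^ 2
        = (∑ j ∈ Finset.univ.filter (· < i), ⟪w, e j⟫ ^ 2) + ⟪w, e i⟫ ^ 2 := by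
      rw [← Finset.sum_filter_add_sum_filter_not Finset.univ (· < i) (fun j => ⟪w, e j⟫ ^ 2)]
      congr 1
      refine Finset.sum_eq_single_of_mem i (by simp) fun j hj hne => ?_
      have hij : i < j := by
        rcases lt_trichotomy i j with h | h | h
        · exact h
        · exact absurd h.symm hne
        · exact absurd h (by simpa using (Finset.mem_filter.1 hj).2)
      rw [hterm, hgt j hij, mul_zero]
      norm_num
    have hei : ⟪w, e i⟫ ^ 2 = ‖gs b i‖ ^ 2 := by
      rw [hterm, hw, inner_w_gs_self]
      have hn : ‖gs b i‖ ≠ 0 := by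
        have := hpos i; intro h; rw [h] at this; norm_num at this
      field_simp
    have hbound : ∀ j ∈ Finset.univ.filter (· < i),
        ⟪w, e j⟫ ^ 2 ≤ (1/4) * ‖gs b j‖ ^ 2 := by
      intro j hj
      have hjlt : j < i := (Finset.mem_filter.1 hj).2
      have h1 := hx' j hjlt
      have h2 := hpos j
      rw [hterm, mul_pow]
      have h3 : (‖gs b j‖⁻¹) ^ 2 = (‖gs b j‖ ^ 2)⁻¹ := by
        rw [← inv_pow]
      rw [h3, mul_comm, ← div_eq_mul_inv, div_le_iff₀ h2]
      nlinarith [abs_nonneg (⟪w, gs b j⟫), sq_abs (⟪w, gs b j⟫)]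
    calc ‖w‖ ^ 2 = (∑ j ∈ Finset.univ.filter (· < i), ⟪w, e j⟫ ^ 2) + ⟪w, e i⟫ ^ 2 := by
          rw [hparseval, hsplit]
      _ ≤ (∑ j ∈ Finset.univ.filter (· < i), (1/4) * ‖gs b j‖ ^ 2) + ‖gs b i‖ ^ 2 := by
          rw [hei]
          exact add_le_add_left (Finset.sum_le_sum hbound) _
      _ = ‖gs b i‖ ^ 2 + (1/4) * ∑ j ∈ Finset.univ.filter (· < i), ‖gs b j‖ ^ 2 := by
          rw [Finset.mul_sum]; ring
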